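/- For probabilities $p \in [0,1]^m$ with $m \ge 1$ and any $\alpha, \beta \in \mathbb{R}$ with $\alpha \le \beta$, the auto-pool aggregates satisfy $\hat P_\alpha(p) \le \hat P_\beta(p)$; in particular the mean-pool value $\hat P_0(p)$ is at most the soft-max-pool value $\hat P_1(p)$, which is at most $\max_i p_i$. -/
import Mathlib

lemma autopool_expand (m : ℕ) (p E F : Fin m → ℝ) :
    ∑ i, ∑ j, (p i - p j) * (E i * F j - F i * E j)
      = 2 * ((∑ i, p i * E i) * (∑ j, F j) - (∑ i, p i * F i) * (∑ j, E j)) := by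
  have h1 : ∑ i, ∑ j, (p i - p j) * (E i * F j - F i * E j)
      = ∑ i, ((p i * E i) * (∑ j, F j) - (p i * F i) * (∑ j, E j)
          - E i * (∑ j, p j * F j) + F i * (∑ j, p j * E j)) := by
    refine Finset.sum_congr rfl fun i _ => ?_
    rw [Finset.mul_sum, Finset.mul_sum, Finset.mul_sum, Finset.mul_sum,
      ← Finset.sum_sub_distrib, ← Finset.sum_sub_distrib, ← Finset.sum_add_distrib]
    refine Finset.sum_congr rfl fun j _ => ?_
    ring
  rw [h1, Finset.sum_add_distrib, Finset.sum_sub_distrib, Finset.sum_sub_distrib,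
    ← Finset.sum_mul, ← Finset.sum_mul, ← Finset.sum_mul, ← Finset.sum_mul]
  ring

lemma autopool_key (m : ℕ) (p : Fin m → ℝ) {α β : ℝ} (hab : α ≤ β) :
    (∑ i, p i * Real.exp (α * p i)) * (∑ j, Real.exp (β * p j))
      ≤ (∑ i, p i * Real.exp (β * p i)) * (∑ j, Real.exp (α * p j)) := by
  have h2 : 0 ≤ ∑ i, ∑ j, (p i - p j) *
      (Real.exp (β * p i) * Real.exp (α * p j)
        - Real.exp (α * p i) * Real.exp (β * p j)) := by
    refine Finset.sum_nonneg fun i _ => Finset.sum_nonneg fun j _ => ?_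
    rcases le_total (p j) (p i) with h | h
    · refine mul_nonneg (by linarith) (sub_nonneg.2 ?_)
      rw [← Real.exp_add, ← Real.exp_add]
      exact Real.exp_le_exp.2 (by nlinarith)
    · have hx : p i - p j ≤ 0 := by linarith
      have hy : Real.exp (β * p i) * Real.exp (α * p j)
          - Real.exp (α * p i) * Real.exp (β * p j) ≤ 0 := by
        rw [sub_nonpos, ← Real.exp_add, ← Real.exp_add]
        exact Real.exp_le_exp.2 (by nlinarith)
      nlinarith [mul_nonneg (neg_nonneg.2 hx) (neg_nonneg.2 hy)]
  rw [autopool_expand m p (fun i => Real.exp (β * p i)) (fun i => Real.exp (α * p i))] at h2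
  linarith

theorem autopool_monotone_in_alpha (m : ℕ) (hm : 1 ≤ m) (p : Fin m → ℝ)
    (hp : ∀ i, p i ∈ Set.Icc (0 : ℝ) 1) :
    (∀ α β : ℝ, α ≤ β →
      (∑ i, p i * (Real.exp (α * p i) / ∑ j, Real.exp (α * p j)))
        ≤ ∑ i, p i * (Real.exp (β * p i) / ∑ j, Real.exp (β * p j))) ∧
    (∑ i, p i * (Real.exp ((0 : ℝ) * p i) / ∑ j, Real.exp ((0 : ℝ) * p j)))
      ≤ (∑ i, p i * (Real.exp ((1 : ℝ) * p i) / ∑ j, Real.exp ((1 : ℝ) * p j))) ∧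
    (∑ i, p i * (Real.exp ((1 : ℝ) * p i) / ∑ j, Real.exp ((1 : ℝ) * p j)))
      ≤ ⨆ i, p i := by
  haveI : NeZero m := ⟨by omega⟩
  have hS : ∀ γ : ℝ, 0 < ∑ j, Real.exp (γ * p j) := fun γ =>
    Finset.sum_pos (fun j _ => Real.exp_pos _) ⟨0, Finset.mem_univ 0⟩
  have hrw : ∀ γ : ℝ, (∑ i, p i * (Real.exp (γ * p i) / ∑ j, Real.exp (γ * p j)))
      = (∑ i, p i * Real.exp (γ * p i)) / ∑ j, Real.exp (γ * p j) := by
    intro γ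
    rw [Finset.sum_div]
    exact Finset.sum_congr rfl fun i _ => by rw [mul_div_assoc]
  have hmono : ∀ α β : ℝ, α ≤ β →
      (∑ i, p i * (Real.exp (α * p i) / ∑ j, Real.exp (α * p j)))
        ≤ ∑ i, p i * (Real.exp (β * p i) / ∑ j, Real.exp (β * p j)) := by
    intro α β hab
    rw [hrw α, hrw β, div_le_div_iff₀ (hS α) (hS β)]
    exact autopool_key m p hab
  refine ⟨hmono, hmono 0 1 (by norm_num), ?_⟩
  have hbdd : BddAbove (Set.range p) := Set.Finite.bddAbove (Set.finite_range p)
  have hle : ∀ i, p i ≤ ⨆ i, p i := fun i => le_ciSup hbdd i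
  have hone : (∑ i, Real.exp ((1:ℝ) * p i) / ∑ j, Real.exp ((1:ℝ) * p j)) = 1 := by
    rw [← Finset.sum_div, div_self (ne_of_gt (hS 1))]
  calc (∑ i, p i * (Real.exp ((1:ℝ) * p i) / ∑ j, Real.exp ((1:ℝ) * p j)))
      ≤ ∑ i, (⨆ i, p i) * (Real.exp ((1:ℝ) * p i) / ∑ j, Real.exp ((1:ℝ) * p j)) := by
        refine Finset.sum_le_sum fun i _ => ?_
        exact mul_le_mul_of_nonneg_right (hle i)
          (div_nonneg (Real.exp_pos _).le (hS 1).le)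
    _ = ⨆ i, p i := by rw [← Finset.mul_sum, hone, mul_one]
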